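/- Let V : ℝⁿ → [0,∞) be continuous, positive definite (V(x) = 0 iff x = 0) and radially unbounded, let κ be a class K¹ function differentiable on (0,∞) with κ' > 0, let 0 ≤ p < 1 and Tc > 0. If x : [0,∞) → ℝⁿ is a solution of ẋ = f(x) such that t ↦ V(x(t)) is differentiable and satisfies d/dt V(x(t)) ≤ -(1/((1-p)Tc)) · κ(V(x(t)))^p / κ'(V(x(t))) whenever x(t) ≠ 0, and x(t) = x(s) for t ≥ s whenever x(s) = 0, then x(t) = 0 for all t ≥ Tc·κ(V(x(0)))^{1-p}, and in particular for all t ≥ Tc. -/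

import Mathlib

def IsClassK1 (kappa : ℝ → ℝ) : Prop :=
  ContinuousOn kappa (Set.Ici 0) ∧ StrictMonoOn kappa (Set.Ici 0) ∧ kappa 0 = 0 ∧
    Filter.Tendsto kappa Filter.atTop (nhds 1) ∧
    ∀ r ∈ Set.Ici (0 : ℝ), kappa r ∈ Set.Ico (0 : ℝ) 1

/- Lyapunov theorem for predefined-time stability: if along a solution of ẋ = f(x),
d/dt V(x(t)) ≤ -(1/((1-p)Tc)) κ(V(x(t)))^p / κ'(V(x(t))) whenever x(t) ≠ 0, then
x(t) = 0 for all t ≥ Tc κ(V(x 0))^(1-p), in particular for all t ≥ Tc. -/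
theorem predefined_time_lyapunov {n : ℕ}
    (f : EuclideanSpace ℝ (Fin n) → EuclideanSpace ℝ (Fin n))
    (V : EuclideanSpace ℝ (Fin n) → ℝ)
    (hV_cont : Continuous V) (hV_nonneg : ∀ z, 0 ≤ V z)
    (hV_pos : ∀ z, z ≠ 0 → 0 < V z) (hV0 : V 0 = 0)
    (hV_rad : Filter.Tendsto V (Filter.comap norm Filter.atTop) Filter.atTop)
    (κ κ' : ℝ → ℝ) (hκ : IsClassK1 κ)
    (hκ' : ∀ r > (0:ℝ), HasDerivAt κ (κ' r) r ∧ 0 < κ' r)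
    (p Tc : ℝ) (hp : 0 ≤ p) (hp1 : p < 1) (hTc : 0 < Tc)
    (x : ℝ → EuclideanSpace ℝ (Fin n)) (w' : ℝ → ℝ)
    (hx_sol : ∀ t ≥ (0:ℝ), HasDerivAt x (f (x t)) t)
    (hw_deriv : ∀ t ≥ (0:ℝ), HasDerivAt (fun τ => V (x τ)) (w' t) t)
    (hw_ineq : ∀ t ≥ (0:ℝ), x t ≠ 0 →
      w' t ≤ -(1 / ((1 - p) * Tc)) * (κ (V (x t)) ^ p / κ' (V (x t))))
    (hx_stay : ∀ s t : ℝ, 0 ≤ s → s ≤ t → x s = 0 → x t = x s) :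
    (∀ t ≥ Tc * κ (V (x 0)) ^ (1 - p), x t = 0) ∧ (∀ t ≥ Tc, x t = 0) := by
  obtain ⟨hκc, hκm, hκ0, _, hκIco⟩ := hκ
  have h1p : (0:ℝ) < 1 - p := by linarith
  set T0 : ℝ := Tc * κ (V (x 0)) ^ (1 - p) with hT0def
  have hκ0x : κ (V (x 0)) ∈ Set.Ico (0:ℝ) 1 := hκIco _ (hV_nonneg _)
  have hT0le : T0 ≤ Tc := by
    have h1 : κ (V (x 0)) ^ (1-p) ≤ 1 := Real.rpow_le_one hκ0x.1 hκ0x.2.le h1p.le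
    calc T0 ≤ Tc * 1 := mul_le_mul_of_nonneg_left h1 hTc.le
    _ = Tc := mul_one Tc
  have hT0nonneg : 0 ≤ T0 := mul_nonneg hTc.le (Real.rpow_nonneg hκ0x.1 _)
  have key : ∃ t₀ ∈ Set.Icc (0:ℝ) T0, x t₀ = 0 := by
    by_contra hcon
    push_neg at hcon
    have hWpos : ∀ t ∈ Set.Icc (0:ℝ) T0, 0 < V (x t) := fun t ht => hV_pos _ (hcon t ht)
    have hκpos : ∀ t ∈ Set.Icc (0:ℝ) T0, 0 < κ (V (x t)) := by
      intro t ht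
      have := hκm (Set.mem_Ici.2 le_rfl) (Set.mem_Ici.2 (hV_nonneg (x t))) (hWpos t ht)
      rwa [hκ0] at this
    set h : ℝ → ℝ := fun t => Tc * κ (V (x t)) ^ (1-p) + t with hdef
    have hderiv : ∀ t ∈ Set.Icc (0:ℝ) T0,
        HasDerivAt h (Tc * ((1-p) * κ (V (x t)) ^ (1-p-1) * (κ' (V (x t)) * w' t)) + 1) t := by
      intro t ht
      have hW := hw_deriv t ht.1
      have hκd := (hκ' (V (x t)) (hWpos t ht)).1
      have hcomp : HasDerivAt (fun τ => κ (V (x τ))) (κ' (V (x t)) * w' t) t := hκd.comp t hW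
      have hpow := Real.hasDerivAt_rpow_const (x := κ (V (x t))) (p := 1-p)
        (Or.inl (hκpos t ht).ne')
      have h2 := hpow.comp t hcomp
      have h3 := (h2.const_mul Tc).add (hasDerivAt_id t)
      exact h3
    have hval : ∀ t ∈ Set.Icc (0:ℝ) T0,
        Tc * ((1-p) * κ (V (x t)) ^ (1-p-1) * (κ' (V (x t)) * w' t)) + 1 ≤ 0 := by
      intro t ht
      set c := κ (V (x t)) with hc
      set k := κ' (V (x t)) with hk
      have hcpos : 0 < c := hκpos t ht
      have hkpos : 0 < k := (hκ' (V (x t)) (hWpos t ht)).2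
      have hcppos : 0 < c ^ (1-p-1) := Real.rpow_pos_of_pos hcpos _
      have hA : 0 < Tc * ((1-p) * c ^ (1-p-1) * k) := by positivity
      have hle := hw_ineq t ht.1 (hcon t ht)
      have hmul := mul_le_mul_of_nonneg_left hle hA.le
      have hcc : c ^ (-p) * c ^ p = 1 := by
        rw [← Real.rpow_add hcpos, show (-p + p : ℝ) = 0 by ring, Real.rpow_zero]
      have hAeq : Tc * ((1-p) * c ^ (1-p-1) * k) * (-(1 / ((1 - p) * Tc)) * (c ^ p / k)) = -1 := by
        rw [show (1-p-1:ℝ) = -p by ring]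
        field_simp
        linear_combination (-1 : ℝ) * hcc
      have : Tc * ((1-p) * c ^ (1-p-1) * (k * w' t))
          = Tc * ((1-p) * c ^ (1-p-1) * k) * w' t := by ring
      rw [this]
      rw [hAeq] at hmul
      linarith
    have hcont : ContinuousOn h (Set.Icc 0 T0) :=
      fun t ht => ((hderiv t ht).continuousAt).continuousWithinAt
    have hanti : AntitoneOn h (Set.Icc 0 T0) := by
      apply antitoneOn_of_deriv_nonpos (convex_Icc 0 T0) hcont
      · intro t ht
        rw [interior_Icc] at ht
        exact ((hderiv t (Set.Ioo_subset_Icc_self ht)).differentiableAt).differentiableWithinAt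
      · intro t ht
        rw [interior_Icc] at ht
        have ht' := Set.Ioo_subset_Icc_self ht
        rw [(hderiv t ht').deriv]
        exact hval t ht'
    have hTIcc : T0 ∈ Set.Icc (0:ℝ) T0 := ⟨hT0nonneg, le_refl _⟩
    have h0Icc : (0:ℝ) ∈ Set.Icc (0:ℝ) T0 := ⟨le_refl _, hT0nonneg⟩
    have hle := hanti h0Icc hTIcc hT0nonneg
    have hposT : 0 < Tc * κ (V (x T0)) ^ (1-p) :=
      mul_pos hTc (Real.rpow_pos_of_pos (hκpos T0 hTIcc) _)
    have hh0 : h 0 = T0 := by simp [hdef, hT0def]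
    have hhT : h T0 = Tc * κ (V (x T0)) ^ (1-p) + T0 := rfl
    rw [hh0, hhT] at hle
    linarith
  obtain ⟨t₀, ht₀, hx0⟩ := key
  have main : ∀ t ≥ T0, x t = 0 := by
    intro t ht
    have := hx_stay t₀ t ht₀.1 (ht₀.2.trans ht) hx0
    rw [this, hx0]
  exact ⟨main, fun t ht => main t (hT0le.trans ht)⟩
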